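/- Let G = (V, E) be a finite connected simple graph with the shortest-path metric δ, and let P ⊆ V with |P| ≥ 2 and P ≠ V. Then the gap ratio of P satisfies GR_P ≥ 2/3; moreover GR_P = 2/3 holds only when R_P = 1 and r_P = 3/2 (equivalently, the minimum pairwise graph distance in P equals 3). -/
import Mathlib


/-- Minimum gap of a vertex set `P` with respect to the shortest-path metric of `G`:
half the least pairwise graph distance. -/
noncomputable def graphMinGap {V : Type*} (G : SimpleGraph V) (P : Set V) : ℝ :=
  sInf {d : ℝ | ∃ p ∈ P, ∃ q ∈ P, p ≠ q ∧ d = (G.dist p q : ℝ)} / 2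

/-- Maximum gap of a vertex set `P` with respect to the shortest-path metric of `G`:
the largest graph distance from a vertex to the set `P`. -/
noncomputable def graphMaxGap {V : Type*} (G : SimpleGraph V) (P : Set V) : ℝ :=
  sSup (Set.range fun v : V => sInf {d : ℝ | ∃ p ∈ P, d = (G.dist v p : ℝ)})

/-- Gap ratio of a vertex set `P` in the shortest-path metric of `G`. -/
noncomputable def graphGapRatio {V : Type*} (G : SimpleGraph V) (P : Set V) : ℝ :=
  graphMaxGap G P / graphMinGap G P

lemma walk_mid {V : Type*} (G : SimpleGraph V) (hG : G.Connected) :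
    ∀ {p q : V} (w : G.Walk p q) (k : ℕ), k ≤ w.length →
      ∃ m : V, G.dist p m ≤ k ∧ G.dist m q ≤ w.length - k := by
  intro p q w
  induction w with
  | @nil u =>
      intro k hk
      simp only [SimpleGraph.Walk.length_nil, Nat.le_zero] at hk
      subst hk
      exact ⟨u, by simp [SimpleGraph.dist_self], by simp [SimpleGraph.dist_self]⟩
  | @cons u u' v h w' ih =>
      intro k hk
      cases k with
      | zero =>
          exact ⟨u, by simp [SimpleGraph.dist_self],
            by simpa using SimpleGraph.dist_le (SimpleGraph.Walk.cons h w')⟩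
      | succ k' =>
          obtain ⟨m, h1, h2⟩ := ih k' (by simpa using hk)
          refine ⟨m, ?_, ?_⟩
          · have ht := hG.dist_triangle (u := u) (v := u') (w := m)
            have h01 : G.dist u u' ≤ 1 := by
              simpa using SimpleGraph.dist_le h.toWalk
            omega
          · simpa using h2


/-- In a finite connected graph with the shortest-path metric, every proper vertex
subset with at least two vertices has gap ratio at least `2/3`, and the value `2/3`
is attained only with maximum gap `1` and minimum gap `3/2`. -/
theorem stmt4 {V : Type*} [Fintype V] (G : SimpleGraph V) (hG : G.Connected)
    (P : Set V) (hcard : 2 ≤ P.ncard) (hne : P ≠ Set.univ) :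
    2/3 ≤ graphGapRatio G P ∧
    (graphGapRatio G P = 2/3 → graphMaxGap G P = 1 ∧ graphMinGap G P = 3/2) := by
  classical
  -- the pairwise-distance set
  set S : Set ℝ := {d : ℝ | ∃ p ∈ P, ∃ q ∈ P, p ≠ q ∧ d = (G.dist p q : ℝ)} with hS
  have hSfin : S.Finite := by
    apply (Set.finite_range (fun pq : V × V => (G.dist pq.1 pq.2 : ℝ))).subset
    rintro d ⟨p, _, q, _, _, rfl⟩
    exact ⟨(p, q), rfl⟩
  obtain ⟨p0, q0, hp0, hq0, hpq0⟩ := (Set.one_lt_ncard_iff P.toFinite).mp (by omega)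
  have hSne : S.Nonempty := ⟨_, p0, hp0, q0, hq0, hpq0, rfl⟩
  have hSmem : sInf S ∈ S := hSne.csInf_mem hSfin
  obtain ⟨p, hp, q, hq, hpq, hpqd⟩ := hSmem
  set n : ℕ := G.dist p q with hn
  have hn1 : 1 ≤ n := hG.pos_dist_of_ne hpq
  -- lower bound on all pairwise distances
  have hSlb : ∀ p' ∈ P, ∀ q' ∈ P, p' ≠ q' → n ≤ G.dist p' q' := by
    intro p' hp' q' hq' hne'
    have : sInf S ≤ (G.dist p' q' : ℝ) :=
      csInf_le hSfin.bddBelow ⟨p', hp', q', hq', hne', rfl⟩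
    rw [hpqd] at this
    exact_mod_cast this
  -- the eccentricity function
  set f : V → ℝ := fun v => sInf {d : ℝ | ∃ p ∈ P, d = (G.dist v p : ℝ)} with hf
  have hTfin : ∀ v, {d : ℝ | ∃ p ∈ P, d = (G.dist v p : ℝ)}.Finite := by
    intro v
    apply (Set.finite_range (fun p : V => (G.dist v p : ℝ))).subset
    rintro d ⟨p', _, rfl⟩
    exact ⟨p', rfl⟩
  have hTne : ∀ v, {d : ℝ | ∃ p ∈ P, d = (G.dist v p : ℝ)}.Nonempty :=
    fun v => ⟨_, p, hp, rfl⟩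
  have hfmem : ∀ v, f v ∈ {d : ℝ | ∃ p ∈ P, d = (G.dist v p : ℝ)} :=
    fun v => (hTne v).csInf_mem (hTfin v)
  have hfle : ∀ v, ∀ p' ∈ P, f v ≤ (G.dist v p' : ℝ) :=
    fun v p' hp' => csInf_le (hTfin v).bddBelow ⟨p', hp', rfl⟩
  -- the max gap
  have hMG : graphMaxGap G P = sSup (Set.range f) := rfl
  have hrfin : (Set.range f).Finite := Set.finite_range f
  have hrne : (Set.range f).Nonempty := ⟨f p, p, rfl⟩
  have hRmem : sSup (Set.range f) ∈ Set.range f := hrne.csSup_mem hrfin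
  obtain ⟨v0, hv0⟩ := hRmem
  have hfleR : ∀ v, f v ≤ sSup (Set.range f) :=
    fun v => le_csSup hrfin.bddAbove ⟨v, rfl⟩
  obtain ⟨pR, hpR, hRd⟩ := hfmem v0
  set Rn : ℕ := G.dist v0 pR with hRn
  have hRval : graphMaxGap G P = (Rn : ℝ) := by rw [hMG, ← hv0, hRd]
  -- R ≥ 1
  have hR1 : 1 ≤ Rn := by
    obtain ⟨v, hv⟩ : ∃ v, v ∉ P := by
      by_contra hc
      push_neg at hc
      exact hne (Set.eq_univ_of_forall hc)
    have h1 : (1 : ℝ) ≤ f v := by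
      obtain ⟨p', hp', hd⟩ := hfmem v
      rw [hd]
      exact_mod_cast hG.pos_dist_of_ne (fun h => hv (by rw [h]; exact hp'))
    have h2 : f v ≤ (Rn : ℝ) := by
      rw [← hRd, hv0]; exact hfleR v
    exact_mod_cast h1.trans h2
  -- midpoint argument : n ≤ 2 * Rn + 1
  have hmid : n ≤ 2 * Rn + 1 := by
    obtain ⟨w, hw⟩ := hG.exists_walk_length_eq_dist p q
    obtain ⟨m, hm1, hm2⟩ := walk_mid G hG w (n / 2) (by omega)
    rw [hw] at hm2
    -- every p' ∈ P is at distance ≥ n/2 from m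
    have hkey : ∀ p' ∈ P, n / 2 ≤ G.dist m p' := by
      intro p' hp'
      by_cases hep : p' = p
      · subst hep
        have ht := hG.dist_triangle (u := p') (v := m) (w := q)
        rw [SimpleGraph.dist_comm]
        omega
      · have hlb := hSlb p hp p' hp' (fun h => hep h.symm)
        have ht := hG.dist_triangle (u := p) (v := m) (w := p')
        omega
    have hfm : ((n / 2 : ℕ) : ℝ) ≤ f m := by
      apply le_csInf (hTne m)
      rintro d ⟨p', hp', rfl⟩
      exact_mod_cast hkey p' hp'
    have h2 : f m ≤ (Rn : ℝ) := by
      rw [← hRd, hv0]; exact hfleR m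
    have : n / 2 ≤ Rn := by exact_mod_cast hfm.trans h2
    omega
  -- arithmetic conclusion
  have hminval : graphMinGap G P = (n : ℝ) / 2 := by
    rw [graphMinGap, ← hS, hpqd]
  have hGR : graphGapRatio G P = (Rn : ℝ) / ((n : ℝ) / 2) := by
    rw [graphGapRatio, hRval, hminval]
  have hx : (1 : ℝ) ≤ (n : ℝ) := by exact_mod_cast hn1
  have hy : (1 : ℝ) ≤ (Rn : ℝ) := by exact_mod_cast hR1
  have hxy : (n : ℝ) ≤ 2 * (Rn : ℝ) + 1 := by exact_mod_cast hmid
  have hxpos : (0 : ℝ) < (n : ℝ) := by linarith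
  constructor
  · rw [hGR, le_div_iff₀ (show (0:ℝ) < (n : ℝ)/2 by linarith)]
    linarith
  · intro heq
    rw [hGR] at heq
    have h3 : 3 * (Rn : ℝ) = (n : ℝ) := by
      rw [div_eq_div_iff (ne_of_gt (by linarith)) (by norm_num)] at heq
      linarith
    have hR1' : (Rn : ℝ) = 1 := by linarith
    have hn3 : (n : ℝ) = 3 := by linarith
    exact ⟨by rw [hRval, hR1'], by rw [hminval, hn3]⟩
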